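/- Let X be a metric space, n ≥ 0, and let D⁽ⁿ⁺¹⁾ : (0,∞) → (0,∞) be an n-dimensional control function of X (in the sense of r-disjoint families). Define a sequence of functions D⁽ⁱ⁾ for i ≥ n+1 inductively by D⁽ⁱ⁺¹⁾(r) = D⁽ⁱ⁾(3r) + 2r. Then for every k ≥ n+1 the function D⁽ᵏ⁾ is an (n,k)-dimensional control function of X. -/
import Mathlib


open Metric Set

/-- A family `U` of subsets of a metric space is `r`-disjoint: any two points belonging to
different members of the family are at distance at least `r`. -/
def RDisjoint {X : Type*} [MetricSpace X] (r : ℝ) (U : Set (Set X)) : Prop :=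
  ∀ A ∈ U, ∀ B ∈ U, A ≠ B → ∀ a ∈ A, ∀ b ∈ B, r ≤ dist a b

/-- Every member of the family `U` has diameter at most `R`. -/
def FamBounded {X : Type*} [MetricSpace X] (R : ℝ) (U : Set (Set X)) : Prop :=
  ∀ A ∈ U, ∀ a ∈ A, ∀ b ∈ A, dist a b ≤ R

/-- `D` is an `(n,k)`-dimensional control function for `X`: for every `r > 0` there are
families `U 1, …, U k` of subsets of `X`, each `r`-disjoint and `D r`-bounded, such that
every point of `X` belongs to the union of at least `k - n` of the families.
An `n`-dimensional control function is the case `k = n + 1`. -/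
def IsNKControl (X : Type*) [MetricSpace X] (n k : ℕ) (D : ℝ → ℝ) : Prop :=
  ∀ r > 0, ∃ U : Fin k → Set (Set X),
    (∀ i, RDisjoint r (U i)) ∧ (∀ i, FamBounded (D r) (U i)) ∧
    ∀ x : X, k - n ≤ {i : Fin k | x ∈ ⋃₀ U i}.ncard

/-- Closed `r`-neighborhood of a set. -/
def aNbhd {X : Type*} [MetricSpace X] (r : ℝ) (A : Set X) : Set X :=
  {y | ∃ a ∈ A, dist y a ≤ r}

/-- A point is "bad" if every family whose `r`-neighborhood contains it already contains it. -/
def aBad {X : Type*} [MetricSpace X] {k : ℕ} (r : ℝ) (U : Fin k → Set (Set X)) (x : X) : Prop :=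
  ∀ i : Fin k, x ∈ ⋃₀ (aNbhd r '' U i) → x ∈ ⋃₀ U i

/-- The class of a bad point: bad points lying in exactly the same members of the families. -/
def aCls {X : Type*} [MetricSpace X] {k : ℕ} (r : ℝ) (U : Fin k → Set (Set X)) (x : X) :
    Set X :=
  {y | aBad r U y ∧ ∀ i : Fin k, ∀ A ∈ U i, (x ∈ A ↔ y ∈ A)}

lemma aux_step {X : Type*} [MetricSpace X] (n k : ℕ) (hk : n + 1 ≤ k) (Dk Dk1 : ℝ → ℝ)
    (hD : ∀ r : ℝ, Dk1 r = Dk (3 * r) + 2 * r)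
    (h : IsNKControl X n k Dk) : IsNKControl X n (k + 1) Dk1 := by
  intro r hr
  obtain ⟨U, hdisj, hbd, hcov⟩ := h (3 * r) (by linarith)
  have key : ∀ a b : X, aBad r U a → aBad r U b → dist a b < r →
      ∀ i : Fin k, ∀ A ∈ U i, a ∈ A → b ∈ A := by
    intro a b ha hb hab i A hA haA
    have hbE : b ∈ ⋃₀ (aNbhd r '' U i) :=
      ⟨aNbhd r A, Set.mem_image_of_mem _ hA, a, haA, by rw [dist_comm]; linarith⟩
    obtain ⟨A', hA', hbA'⟩ := hb i hbE
    by_contra hbA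
    have hne : A ≠ A' := fun h => hbA (h ▸ hbA')
    have h3 := hdisj i A hA A' hA' hne a haA b hbA'
    linarith
  refine ⟨Fin.lastCases (aCls r U '' {x | aBad r U x}) (fun i => aNbhd r '' U i), ?_, ?_, ?_⟩
  · -- r-disjointness
    intro j
    induction j using Fin.lastCases with
    | last =>
      simp only [Fin.lastCases_last]
      intro S hS T hT hST a ha b hb
      by_contra hlt
      push_neg at hlt
      obtain ⟨x, hx, rfl⟩ := hS
      obtain ⟨y, hy, rfl⟩ := hT
      obtain ⟨haB, hxa⟩ := ha
      obtain ⟨hbB, hyb⟩ := hb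
      have hab : ∀ i : Fin k, ∀ A ∈ U i, (a ∈ A ↔ b ∈ A) := fun i A hA =>
        ⟨key a b haB hbB hlt i A hA, key b a hbB haB (by rw [dist_comm]; exact hlt) i A hA⟩
      have hxy : ∀ i : Fin k, ∀ A ∈ U i, (x ∈ A ↔ y ∈ A) := fun i A hA =>
        ((hxa i A hA).trans (hab i A hA)).trans (hyb i A hA).symm
      apply hST
      ext z
      simp only [aCls, mem_setOf_eq]
      constructor
      · rintro ⟨hz, hxz⟩
        exact ⟨hz, fun i A hA => (hxy i A hA).symm.trans (hxz i A hA)⟩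
      · rintro ⟨hz, hyz⟩
        exact ⟨hz, fun i A hA => (hxy i A hA).trans (hyz i A hA)⟩
    | cast i =>
      simp only [Fin.lastCases_castSucc]
      intro S hS T hT hST a ha b hb
      obtain ⟨A, hA, rfl⟩ := hS
      obtain ⟨A', hA', rfl⟩ := hT
      have hAA : A ≠ A' := fun h => hST (by rw [h])
      obtain ⟨a0, ha0, ha0d⟩ := ha
      obtain ⟨b0, hb0, hb0d⟩ := hb
      have h3 := hdisj i A hA A' hA' hAA a0 ha0 b0 hb0
      have h4 := dist_triangle4 a0 a b b0
      have h5 : dist a0 a = dist a a0 := dist_comm _ _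
      linarith
  · -- boundedness
    intro j
    rw [hD r]
    induction j using Fin.lastCases with
    | last =>
      simp only [Fin.lastCases_last]
      intro S hS a ha b hb
      obtain ⟨x, hxB, rfl⟩ := hS
      have h1 : ({i : Fin k | x ∈ ⋃₀ U i}).Nonempty := by
        apply Set.nonempty_of_ncard_ne_zero
        have := hcov x
        omega
      obtain ⟨i, hi⟩ := h1
      obtain ⟨A, hA, hxA⟩ := hi
      have haA : a ∈ A := (ha.2 i A hA).mp hxA
      have hbA : b ∈ A := (hb.2 i A hA).mp hxA
      have := hbd i A hA a haA b hbA
      linarith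
    | cast i =>
      simp only [Fin.lastCases_castSucc]
      intro S hS a ha b hb
      obtain ⟨A, hA, rfl⟩ := hS
      obtain ⟨a0, ha0, ha0d⟩ := ha
      obtain ⟨b0, hb0, hb0d⟩ := hb
      have h3 := hbd i A hA a0 ha0 b0 hb0
      have h4 := dist_triangle4 a a0 b0 b
      have h5 : dist b0 b = dist b b0 := dist_comm _ _
      linarith
  · -- coverage
    intro x
    have hS := hcov x
    show k + 1 - n ≤ {j : Fin (k + 1) | x ∈ ⋃₀ (Fin.lastCases (aCls r U '' {x | aBad r U x})
      (fun i => aNbhd r '' U i) j : Set (Set X))}.ncard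
    by_cases hxB : aBad r U x
    · have hsub : insert (Fin.last k) (Fin.castSucc '' {i : Fin k | x ∈ ⋃₀ U i}) ⊆
          {j : Fin (k + 1) | x ∈ ⋃₀ (Fin.lastCases (aCls r U '' {x | aBad r U x})
            (fun i => aNbhd r '' U i) j : Set (Set X))} := by
        rintro j (rfl | ⟨i, hi, rfl⟩)
        · simp only [mem_setOf_eq, Fin.lastCases_last]
          exact ⟨aCls r U x, Set.mem_image_of_mem _ hxB, hxB, fun i A hA => Iff.rfl⟩
        · simp only [mem_setOf_eq, Fin.lastCases_castSucc]
          obtain ⟨A, hA, hxA⟩ := hi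
          exact ⟨aNbhd r A, Set.mem_image_of_mem _ hA, x, hxA, by rw [dist_self]; linarith⟩
      have hcount := Set.ncard_le_ncard hsub (Set.toFinite _)
      rw [Set.ncard_insert_of_notMem, Set.ncard_image_of_injective _
        (Fin.castSucc_injective k)] at hcount
      · omega
      · rintro ⟨i, hi, hlast⟩
        exact (Fin.castSucc_lt_last i).ne hlast
    · simp only [aBad, not_forall] at hxB
      obtain ⟨i0, hi0E, hi0U⟩ := hxB
      have hsub : insert (Fin.castSucc i0) (Fin.castSucc '' {i : Fin k | x ∈ ⋃₀ U i}) ⊆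
          {j : Fin (k + 1) | x ∈ ⋃₀ (Fin.lastCases (aCls r U '' {x | aBad r U x})
            (fun i => aNbhd r '' U i) j : Set (Set X))} := by
        rintro j (rfl | ⟨i, hi, rfl⟩)
        · simp only [mem_setOf_eq, Fin.lastCases_castSucc]
          exact hi0E
        · simp only [mem_setOf_eq, Fin.lastCases_castSucc]
          obtain ⟨A, hA, hxA⟩ := hi
          exact ⟨aNbhd r A, Set.mem_image_of_mem _ hA, x, hxA, by rw [dist_self]; linarith⟩
      have hcount := Set.ncard_le_ncard hsub (Set.toFinite _)
      rw [Set.ncard_insert_of_notMem, Set.ncard_image_of_injective _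
        (Fin.castSucc_injective k)] at hcount
      · omega
      · rintro ⟨i, hi, heq⟩
        have : i = i0 := Fin.castSucc_injective k heq
        subst this
        exact hi0U hi

/-- Ostrand-type theorem: if `D (n+1)` is an `n`-dimensional control function of `X`
and `D (i+1) r = D i (3 r) + 2 r` for all `i ≥ n + 1`, then `D k` is an
`(n,k)`-dimensional control function of `X` for every `k ≥ n + 1`. -/
theorem stmt0 {X : Type*} [MetricSpace X] (n : ℕ) (D : ℕ → ℝ → ℝ)
    (hpos : ∀ r > 0, 0 < D (n + 1) r)
    (hbase : IsNKControl X n (n + 1) (D (n + 1)))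
    (hind : ∀ i ≥ n + 1, ∀ r : ℝ, D (i + 1) r = D i (3 * r) + 2 * r) :
    ∀ k ≥ n + 1, IsNKControl X n k (D k) := by
  intro k hk
  induction k, hk using Nat.le_induction with
  | base => exact hbase
  | succ k hk ih => exact aux_step n k hk (D k) (D (k + 1)) (hind k hk) ih
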